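/- Degree reduction restricts mass matrices: let d ≥ 1, N ≥ 0 and 0 ≤ i, j ≤ N. For all multi-indices α of weight N−i and β of weight N−j, ∫_{T_d} b^{N−i}_α(x) b^{N−j}_β(x) dx = ((E^N_{N−i})ᵀ M^N E^N_{N−j})_{α,β}, i.e., the cross mass matrix between degrees N−i and N−j equals the degree-N mass matrix conjugated by degree elevation operators. -/

import Mathlib

open MeasureTheory

/-- The unit `n`-simplex `T_n = {x ∈ ℝ^n : x_i ≥ 0, Σ x_i ≤ 1}`. -/
def unitSimplex (n : ℕ) : Set (Fin n → ℝ) := {x | (∀ i, 0 ≤ x i) ∧ ∑ i, x i ≤ 1}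

/-- Barycentric coordinates `λ(x) = (x_1, …, x_n, 1 − Σ_i x_i)` of `x ∈ ℝ^n`. -/
noncomputable def bary (n : ℕ) (x : Fin n → ℝ) : Fin (n + 1) → ℝ :=
  Fin.snoc x (1 - ∑ i, x i)

/-- The Bernstein basis function `b^N_α(x) = (N!/∏_j α_j!) · ∏_j λ(x)_j^{α_j}` on `ℝ^n`,
for a multi-index `α : Fin (n+1) → ℕ`. -/
noncomputable def bernFn (n N : ℕ) (α : Fin (n + 1) → ℕ) (x : Fin n → ℝ) : ℝ :=
  ((N.factorial : ℝ) / ∏ j, ((α j).factorial : ℝ)) * ∏ j, bary n x j ^ α j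

/-- Entry `(β, α)` of the one-degree elevation matrix `E^m_{m−1}` (real entries) for
multi-indices over `Fin n`: `(α_j + 1)/m` if `β = α + e_j` for some `j`, `0` otherwise. -/
noncomputable def elevEntryR (n m : ℕ) (β α : Fin n → ℕ) : ℝ :=
  ∑ j, if β = α + Pi.single j 1 then ((α j : ℝ) + 1) / (m : ℝ) else 0

/-- Entry `(β, α)` of the composite elevation matrix
`E^N_{N−i} = E^N_{N−1} E^{N−1}_{N−2} ⋯ E^{N−i+1}_{N−i}` (with `E^N_N` the identity),
for multi-indices over `Fin n` (`β` of weight `N`, `α` of weight `N−i`). -/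
noncomputable def elevComp (n N : ℕ) : ℕ → (Fin n → ℕ) → (Fin n → ℕ) → ℝ
  | 0, β, α => if β = α then 1 else 0
  | i + 1, β, α => ∑ γ ∈ Finset.Nat.antidiagonalTuple n (N - i),
      elevComp n N i β γ * elevEntryR n (N - i) γ α

/-- Degree reduction restricts mass matrices: for `d ≥ 1`, `N ≥ 0`, `0 ≤ i, j ≤ N`, and
multi-indices `α` of weight `N−i`, `β` of weight `N−j`:
`∫_{T_d} b^{N−i}_α b^{N−j}_β dx = ((E^N_{N−i})ᵀ M^N E^N_{N−j})_{α,β}`. -/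
lemma bary_sum (n : ℕ) (x : Fin n → ℝ) : ∑ j, bary n x j = 1 := by
  simp [bary, Fin.sum_univ_castSucc]

lemma bary_continuous (n : ℕ) (j : Fin (n+1)) : Continuous fun x : Fin n → ℝ => bary n x j := by
  unfold bary
  induction j using Fin.lastCases with
  | last =>
      simp only [Fin.snoc_last]
      exact (continuous_const.sub (continuous_finset_sum _ fun i _ => continuous_apply i))
  | cast i => simpa using continuous_apply i

lemma bernFn_continuous (n N : ℕ) (α : Fin (n+1) → ℕ) : Continuous (bernFn n N α) := by
  unfold bernFn
  exact continuous_const.mul (continuous_finset_prod _ fun j _ => (bary_continuous n j).pow _)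

lemma isCompact_unitSimplex (n : ℕ) : IsCompact (unitSimplex n) := by
  have hsub : unitSimplex n ⊆ Set.Icc 0 1 := fun x hx =>
    ⟨fun i => hx.1 i, fun i =>
      le_trans (Finset.single_le_sum (fun k _ => hx.1 k) (Finset.mem_univ i)) hx.2⟩
  have hclosed : IsClosed (unitSimplex n) := by
    have he : unitSimplex n = (⋂ i, {x : Fin n → ℝ | 0 ≤ x i}) ∩ {x | ∑ i, x i ≤ 1} := by
      ext x; simp [unitSimplex]
    rw [he]
    exact (isClosed_iInter fun i => isClosed_le continuous_const (continuous_apply i)).inter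
      (isClosed_le (continuous_finset_sum _ fun i _ => continuous_apply i) continuous_const)
  exact isCompact_Icc.of_isClosed_subset hclosed hsub

lemma integrable_bern (d N M : ℕ) (γ δ : Fin (d+1) → ℕ) :
    IntegrableOn (fun x => bernFn d N γ x * bernFn d M δ x) (unitSimplex d) := by
  exact ((bernFn_continuous d N γ).mul (bernFn_continuous d M δ)).continuousOn.integrableOn_compact
    (isCompact_unitSimplex d)

lemma elev_step (d m : ℕ) (hm : 1 ≤ m) (α : Fin (d+1) → ℕ) (hα : ∑ k, α k = m - 1)
    (x : Fin d → ℝ) :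
    bernFn d (m-1) α x = ∑ β ∈ Finset.Nat.antidiagonalTuple (d+1) m,
      elevEntryR (d+1) m β α * bernFn d m β x := by
  have hP : (∏ k, ((α k).factorial : ℝ)) ≠ 0 :=
    ne_of_gt (Finset.prod_pos fun k _ => by positivity)
  have key : ∀ j : Fin (d+1), ((α j : ℝ)+1)/(m:ℝ) * bernFn d m (α + Pi.single j 1) x
      = (((m-1).factorial : ℝ) / ∏ k, ((α k).factorial:ℝ)) * (∏ k, bary d x k ^ α k)
          * bary d x j := by
    intro j
    have hprodf : ∏ k : Fin (d+1), ((((α + Pi.single j 1 : Fin (d+1) → ℕ)) k).factorial : ℝ)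
        = ((α j:ℝ)+1) * ∏ k, ((α k).factorial:ℝ) := by
      conv_lhs => rw [← Finset.mul_prod_erase Finset.univ _ (Finset.mem_univ j)]
      conv_rhs => rw [← Finset.mul_prod_erase Finset.univ _ (Finset.mem_univ j)]
      have h1 : ∀ k ∈ Finset.univ.erase j,
          ((((α + Pi.single j 1 : Fin (d+1) → ℕ)) k).factorial : ℝ) = ((α k).factorial : ℝ) := by
        intro k hk
        have hkj := Finset.ne_of_mem_erase hk
        simp [Pi.single_apply, hkj]
      rw [Finset.prod_congr rfl h1]
      have : ((α + Pi.single j 1 : Fin (d+1) → ℕ)) j = α j + 1 := by simp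
      rw [this, Nat.factorial_succ]
      push_cast
      ring
    have hprodl : ∏ k : Fin (d+1), bary d x k ^ (((α + Pi.single j 1 : Fin (d+1) → ℕ)) k)
        = bary d x j * ∏ k, bary d x k ^ α k := by
      conv_lhs => rw [← Finset.mul_prod_erase Finset.univ _ (Finset.mem_univ j)]
      conv_rhs => rw [← Finset.mul_prod_erase Finset.univ _ (Finset.mem_univ j)]
      have h1 : ∀ k ∈ Finset.univ.erase j,
          bary d x k ^ (((α + Pi.single j 1 : Fin (d+1) → ℕ)) k) = bary d x k ^ α k := by
        intro k hk
        have hkj := Finset.ne_of_mem_erase hk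
        simp [Pi.single_apply, hkj]
      rw [Finset.prod_congr rfl h1]
      have : ((α + Pi.single j 1 : Fin (d+1) → ℕ)) j = α j + 1 := by simp
      rw [this, pow_succ]
      ring
    unfold bernFn
    rw [hprodf, hprodl]
    have hmf : (m.factorial : ℝ) = m * (m-1).factorial := by
      conv_lhs => rw [show m = (m-1)+1 from (Nat.succ_pred_eq_of_pos hm).symm]
      rw [Nat.factorial_succ]
      push_cast [Nat.cast_sub hm]
      ring
    rw [hmf]
    have hm0 : (m:ℝ) ≠ 0 := by positivity
    have ha0 : ((α j : ℝ) + 1) ≠ 0 := by positivity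
    field_simp
  have hmem : ∀ j : Fin (d+1), α + Pi.single j 1 ∈ Finset.Nat.antidiagonalTuple (d+1) m := by
    intro j
    rw [Finset.Nat.mem_antidiagonalTuple]
    simp [Finset.sum_add_distrib, hα, Pi.single_apply, Nat.sub_add_cancel hm]
  calc bernFn d (m-1) α x
      = ∑ j : Fin (d+1), ((α j : ℝ)+1)/(m:ℝ) * bernFn d m (α + Pi.single j 1) x := by
        simp_rw [key]
        rw [← Finset.mul_sum, bary_sum, mul_one]
        simp [bernFn]
    _ = ∑ β ∈ Finset.Nat.antidiagonalTuple (d+1) m,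
          elevEntryR (d+1) m β α * bernFn d m β x := by
        simp_rw [elevEntryR, Finset.sum_mul]
        rw [Finset.sum_comm]
        refine Finset.sum_congr rfl fun j _ => ?_
        simp_rw [ite_mul, zero_mul]
        rw [Finset.sum_ite_eq' (Finset.Nat.antidiagonalTuple (d+1) m)
          (α + Pi.single j 1) (fun β => ((α j : ℝ)+1)/(m:ℝ) * bernFn d m β x)]
        simp [hmem j]

lemma elev_comp_expand (d N : ℕ) : ∀ i, i ≤ N → ∀ α : Fin (d+1) → ℕ, (∑ k, α k = N - i) →
    ∀ x : Fin d → ℝ,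
    bernFn d (N-i) α x = ∑ γ ∈ Finset.Nat.antidiagonalTuple (d+1) N,
      elevComp (d+1) N i γ α * bernFn d N γ x := by
  intro i
  induction i with
  | zero =>
    intro _ α hα x
    have hmem : α ∈ Finset.Nat.antidiagonalTuple (d+1) N := by
      rw [Finset.Nat.mem_antidiagonalTuple]
      simpa using hα
    simp only [elevComp, Nat.sub_zero, ite_mul, one_mul, zero_mul]
    rw [Finset.sum_ite_eq' (Finset.Nat.antidiagonalTuple (d+1) N) α (fun γ => bernFn d N γ x)]
    simp [hmem]
  | succ i ih =>
    intro hi α hα x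
    have hi' : i ≤ N := Nat.le_of_succ_le hi
    have hm : 1 ≤ N - i := Nat.le_sub_of_add_le (by omega)
    have hα' : ∑ k, α k = (N - i) - 1 := by rw [hα]; omega
    rw [show N - (i+1) = (N - i) - 1 from by omega, elev_step d (N-i) hm α hα' x]
    have hrw : ∀ δ ∈ Finset.Nat.antidiagonalTuple (d+1) (N-i),
        elevEntryR (d+1) (N-i) δ α * bernFn d (N-i) δ x
          = ∑ γ ∈ Finset.Nat.antidiagonalTuple (d+1) N,
              elevEntryR (d+1) (N-i) δ α * (elevComp (d+1) N i γ δ * bernFn d N γ x) := by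
      intro δ hδ
      rw [ih hi' δ (Finset.Nat.mem_antidiagonalTuple.1 hδ) x, Finset.mul_sum]
    rw [Finset.sum_congr rfl hrw, Finset.sum_comm]
    refine Finset.sum_congr rfl fun γ _ => ?_
    show _ = (∑ δ ∈ Finset.Nat.antidiagonalTuple (d+1) (N-i),
        elevComp (d+1) N i γ δ * elevEntryR (d+1) (N-i) δ α) * bernFn d N γ x
    rw [Finset.sum_mul]
    exact Finset.sum_congr rfl fun δ _ => by ring

theorem stmt7 (d N i j : ℕ) (hd : 1 ≤ d) (hi : i ≤ N) (hj : j ≤ N)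
    (α β : Fin (d + 1) → ℕ) (hα : ∑ k, α k = N - i) (hβ : ∑ k, β k = N - j) :
    ∫ x in unitSimplex d, bernFn d (N - i) α x * bernFn d (N - j) β x
      = ∑ γ ∈ Finset.Nat.antidiagonalTuple (d + 1) N,
          ∑ δ ∈ Finset.Nat.antidiagonalTuple (d + 1) N,
            elevComp (d + 1) N i γ α
              * (∫ x in unitSimplex d, bernFn d N γ x * bernFn d N δ x)
              * elevComp (d + 1) N j δ β := by
  have h1 : ∀ x : Fin d → ℝ, bernFn d (N-i) α x * bernFn d (N-j) β x
      = ∑ γ ∈ Finset.Nat.antidiagonalTuple (d+1) N,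
          ∑ δ ∈ Finset.Nat.antidiagonalTuple (d+1) N,
            elevComp (d+1) N i γ α * (bernFn d N γ x * bernFn d N δ x)
              * elevComp (d+1) N j δ β := by
    intro x
    rw [elev_comp_expand d N i hi α hα x, elev_comp_expand d N j hj β hβ x,
      Finset.sum_mul_sum]
    exact Finset.sum_congr rfl fun γ _ => Finset.sum_congr rfl fun δ _ => by ring
  simp_rw [h1]
  rw [integral_finset_sum]
  · refine Finset.sum_congr rfl fun γ _ => ?_
    rw [integral_finset_sum]
    · refine Finset.sum_congr rfl fun δ _ => ?_
      rw [show (fun x => elevComp (d+1) N i γ α * (bernFn d N γ x * bernFn d N δ x)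
            * elevComp (d+1) N j δ β)
          = fun x => elevComp (d+1) N i γ α
              * ((bernFn d N γ x * bernFn d N δ x) * elevComp (d+1) N j δ β)
        from funext fun x => by ring]
      rw [MeasureTheory.integral_const_mul, MeasureTheory.integral_mul_const]
      ring
    · intro δ _
      exact (((integrable_bern d N N γ δ).const_mul _).mul_const _)
  · intro γ _
    refine integrable_finset_sum _ fun δ _ => ?_
    exact (((integrable_bern d N N γ δ).const_mul _).mul_const _)
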